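/- Let H be a polarized integral Hodge structure of weight zero, with underlying free Z-module H_Z, polarization form Q, and Hodge filtration F. If a class h ∈ H_Z satisfies |Q(h,h)| ≤ K and |Q(h,v)| ≤ R·‖v‖_H for every v ∈ F¹H (where ‖·‖_H denotes the Hodge norm), then ‖h‖_H² ≤ K + 4R². -/

import Mathlib

/-- For a polarized integral Hodge structure of weight zero (encoded by the
projections `π p` onto the Hodge summands `H^{p,-p}`, the conjugation `conj`, the
polarization `Q`, and the resulting Hodge norm `normH`), any integral class `h` with
`|Q(h,h)| ≤ K` and `|Q(h,v)| ≤ R‖v‖_H` for all `v ∈ F¹H` satisfies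
`‖h‖_H² ≤ K + 4R²`. -/
theorem stmt_0 {H : Type*} [AddCommGroup H] [Module ℂ H] [FiniteDimensional ℂ H]
    -- the Hodge decomposition H = ⊕ₚ H^{p,-p}, via its projections
    (s : Finset ℤ) (π : ℤ → (H →ₗ[ℂ] H))
    (hsum : ∀ x : H, ∑ p ∈ s, π p x = x)
    (horth : ∀ p q : ℤ, p ≠ q → ∀ x : H, π p (π q x) = 0)
    (hidem : ∀ (p : ℤ) (x : H), π p (π p x) = π p x)
    -- conjugation with respect to the real structure, swapping H^{p,-p} and H^{-p,p}
    (conj : H →+ H)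
    (hconj_smul : ∀ (c : ℂ) (x : H), conj (c • x) = (starRingEnd ℂ) c • conj x)
    (hconj_inv : ∀ x : H, conj (conj x) = x)
    (hconjπ : ∀ (p : ℤ) (x : H), conj (π p x) = π (-p) (conj x))
    -- the polarization form and the bilinear relations
    (Q : H →ₗ[ℂ] H →ₗ[ℂ] ℂ)
    (hQsymm : ∀ x y : H, Q x y = Q y x)
    (hQorth : ∀ (p q : ℤ) (x y : H), q ≠ -p → Q (π p x) (π q y) = 0)
    (hQpos : ∀ (p : ℤ) (x : H),
      0 ≤ ((-1 : ℂ) ^ p * Q (π p x) (conj (π p x))).re ∧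
      ((-1 : ℂ) ^ p * Q (π p x) (conj (π p x))).im = 0)
    -- the integral lattice (consisting of real classes)
    (HZ : AddSubgroup H) (hHZ : ∀ x ∈ HZ, conj x = x)
    -- the Hodge norm
    (normH : H → ℝ)
    (hnormH : ∀ x : H,
      normH x = Real.sqrt (∑ p ∈ s, ((-1 : ℂ) ^ p * Q (π p x) (conj (π p x))).re))
    (K R : ℝ) (hK : 0 ≤ K) (hR : 0 ≤ R)
    (h : H) (hh : h ∈ HZ)
    (hQh : ‖Q h h‖ ≤ K)
    (hQhv : ∀ v : H, (∀ p : ℤ, p ≤ 0 → π p v = 0) → ‖Q h v‖ ≤ R * normH v) :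
    (normH h) ^ 2 ≤ K + 4 * R ^ 2 := by
  classical
  -- projections vanish off s
  have hπ0 : ∀ p : ℤ, p ∉ s → π p h = 0 := by
    intro p hp
    have : π p (∑ q ∈ s, π q h) = π p h := by rw [hsum h]
    rw [map_sum] at this
    rw [← this]
    exact Finset.sum_eq_zero (fun q hq => horth p q (fun e => hp (e ▸ hq)) h)
  have hconjh : conj h = h := hHZ h hh
  have hconjπh : ∀ p : ℤ, conj (π p h) = π (-p) h := fun p => by
    rw [hconjπ, hconjh]
  set a : ℤ → ℂ := fun p => Q (π p h) (π (-p) h) with ha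
  have hsymA : ∀ p : ℤ, a (-p) = a p := by
    intro p
    simp only [ha, neg_neg]
    exact hQsymm _ _
  have hA0 : ∀ p : ℤ, p ∉ s → a p = 0 := by
    intro p hp
    simp only [ha, hπ0 p hp, map_zero, LinearMap.zero_apply]
  have hpos : ∀ p : ℤ, 0 ≤ ((-1 : ℂ) ^ p * a p).re ∧ ((-1 : ℂ) ^ p * a p).im = 0 := by
    intro p
    have := hQpos p h
    rwa [hconjπh] at this
  -- contracting sums against Q
  have hQleft : ∀ (p : ℤ) (y : H), Q h (π p y) = Q (π (-p) h) (π p y) := by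
    intro p y
    have e : Q h (π p y) = ∑ q ∈ s, Q (π q h) (π p y) := by
      conv_lhs => rw [← hsum h]
      rw [map_sum, LinearMap.coe_sum, Finset.sum_apply]
    rw [e]
    refine Finset.sum_eq_single (-p) ?_ ?_
    · intro q _ hq
      exact hQorth q p h y (by omega)
    · intro hq
      rw [hπ0 _ hq]
      simp
  -- Q h h as a sum
  have hQhh : Q h h = ∑ p ∈ s, a p := by
    have e : (Q h) (∑ p ∈ s, π p h) = ∑ p ∈ s, Q h (π p h) := map_sum (Q h) _ s
    rw [hsum h] at e
    rw [e]
    refine Finset.sum_congr rfl (fun p _ => ?_)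
    rw [hQleft p h, hQsymm]
  -- the symmetrized index set
  set t : Finset ℤ := s ∪ s.image (fun p => -p) with hts
  have htsym : ∀ p ∈ t, -p ∈ t := by
    intro p hp
    rcases Finset.mem_union.mp hp with hp | hp
    · exact Finset.mem_union_right _ (Finset.mem_image.mpr ⟨p, hp, rfl⟩)
    · rcases Finset.mem_image.mp hp with ⟨q, hq, rfl⟩
      exact Finset.mem_union_left _ (by simpa using hq)
  have hst : s ⊆ t := Finset.subset_union_left
  set filt : Finset ℤ := (t.filter (fun p => Odd p)).filter (fun p => 0 < p) with hfilt
  set B : ℂ := ∑ p ∈ filt, a p with hB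
  -- odd part of the sum
  have hodd : ∑ p ∈ s.filter (fun p => Odd p), a p = 2 * B := by
    have e1 : ∑ p ∈ s.filter (fun p => Odd p), a p
        = ∑ p ∈ t.filter (fun p => Odd p), a p := by
      refine Finset.sum_subset (Finset.filter_subset_filter _ hst) ?_
      intro p hp hps
      refine hA0 p (fun hpss => hps ?_)
      exact Finset.mem_filter.mpr ⟨hpss, (Finset.mem_filter.mp hp).2⟩
    rw [e1, ← Finset.sum_filter_add_sum_filter_not (t.filter (fun p => Odd p)) (fun p => 0 < p)]
    have e2 : ∑ p ∈ (t.filter (fun p => Odd p)).filter (fun p => ¬ 0 < p), a p = B := by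
      rw [hB]
      refine Finset.sum_nbij' (fun p => -p) (fun p => -p) ?_ ?_ ?_ ?_ ?_
      · intro p hp
        simp only [hfilt, Finset.mem_filter] at hp ⊢
        obtain ⟨⟨hpt, hpo⟩, hpn⟩ := hp
        refine ⟨⟨htsym p hpt, hpo.neg⟩, ?_⟩
        rcases hpo with ⟨k, hk⟩
        omega
      · intro p hp
        simp only [hfilt, Finset.mem_filter] at hp ⊢
        obtain ⟨⟨hpt, hpo⟩, hpn⟩ := hp
        refine ⟨⟨htsym p hpt, hpo.neg⟩, ?_⟩
        rcases hpo with ⟨k, hk⟩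
        omega
      · intro p _; ring
      · intro p _; ring
      · intro p _
        exact (hsymA p).symm
    rw [e2, ← hB]; ring
  -- the test vector v ∈ F¹
  set v : H := ∑ p ∈ filt, π p h with hv
  have hπv : ∀ q : ℤ, π q v = if q ∈ filt then π q h else 0 := by
    intro q
    rw [hv, map_sum]
    by_cases hq : q ∈ filt
    · simp only [hq, if_true]
      refine Finset.sum_eq_single_of_mem q hq (fun p _ hpq => horth q p hpq.symm h) |>.trans ?_
      exact hidem q h
    · simp only [hq, if_false]
      exact Finset.sum_eq_zero (fun p hp => horth q p (fun e => hq (e ▸ hp)) h)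
  have hF1 : ∀ p : ℤ, p ≤ 0 → π p v = 0 := by
    intro p hp
    rw [hπv]
    have : p ∉ filt := by
      intro hpf
      have := (Finset.mem_filter.mp hpf).2
      omega
    simp [this]
  -- Q h v = B
  have hQhv' : Q h v = B := by
    rw [hv, map_sum, hB]
    refine Finset.sum_congr rfl (fun p _ => ?_)
    rw [hQleft p h, hQsymm]
  -- each a p for p odd is a nonpositive real
  have hoddterm : ∀ p : ℤ, Odd p → (a p).im = 0 ∧ (a p).re ≤ 0 := by
    intro p hp
    have hneg : ((-1 : ℂ) ^ p) = -1 := hp.neg_one_zpow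
    have h1 := (hpos p).1
    have h2 := (hpos p).2
    rw [hneg] at h1 h2
    simp only [neg_one_mul, Complex.neg_re, Complex.neg_im] at h1 h2
    constructor <;> linarith
  have hfiltodd : ∀ p ∈ filt, Odd p := fun p hp =>
    (Finset.mem_filter.mp (Finset.mem_filter.mp hp).1).2
  set T : ℝ := -(B.re) with hT
  have hBim : B.im = 0 := by
    rw [hB, Complex.im_sum]
    exact Finset.sum_eq_zero (fun p hp => (hoddterm p (hfiltodd p hp)).1)
  have hT0 : 0 ≤ T := by
    rw [hT, hB, Complex.re_sum]
    simp only [neg_nonneg]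
    exact Finset.sum_nonpos (fun p hp => (hoddterm p (hfiltodd p hp)).2)
  -- compute normH v
  have hnv : normH v = Real.sqrt T := by
    rw [hnormH v]
    congr 1
    have e : ∀ p ∈ s, ((-1 : ℂ) ^ p * Q (π p v) (conj (π p v))).re
        = if p ∈ filt then -(a p).re else 0 := by
      intro p _
      rw [hπv p]
      by_cases hp : p ∈ filt
      · simp only [hp, if_true]
        rw [hconjπh]
        have hneg : ((-1 : ℂ) ^ p) = -1 := (hfiltodd p hp).neg_one_zpow
        rw [hneg]
        simp [ha]
      · simp only [hp, if_false]
        simp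
    rw [Finset.sum_congr rfl e, Finset.sum_ite_mem]
    have e2 : ∑ p ∈ s ∩ filt, -(a p).re = ∑ p ∈ filt, -(a p).re := by
      refine Finset.sum_subset Finset.inter_subset_right ?_
      intro p hp hpn
      have hps : p ∉ s := fun hps => hpn (Finset.mem_inter.mpr ⟨hps, hp⟩)
      rw [hA0 p hps]
      simp
    rw [e2, hT, hB, Complex.re_sum, Finset.sum_neg_distrib]
  -- T ≤ R²
  have hTR : T ≤ R ^ 2 := by
    have habs : ‖Q h v‖ = T := by
      rw [hQhv', Complex.norm_def, Complex.normSq_apply, hBim]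
      rw [show B.re = -T by rw [hT]; ring]
      rw [show (-T) * (-T) + 0 * 0 = T ^ 2 by ring]
      exact Real.sqrt_sq hT0
    have hle := hQhv v hF1
    rw [habs, hnv] at hle
    nlinarith [sq_nonneg (R - Real.sqrt T), Real.sq_sqrt hT0, Real.sqrt_nonneg T]
  -- compute normH h squared
  have hS0 : 0 ≤ ∑ p ∈ s, ((-1 : ℂ) ^ p * a p).re :=
    Finset.sum_nonneg (fun p _ => (hpos p).1)
  have hnh : (normH h) ^ 2 = ∑ p ∈ s, ((-1 : ℂ) ^ p * a p).re := by
    rw [hnormH h]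
    have e : ∀ p ∈ s, ((-1 : ℂ) ^ p * Q (π p h) (conj (π p h))).re
        = ((-1 : ℂ) ^ p * a p).re := by
      intro p _
      rw [hconjπh]
    rw [Finset.sum_congr rfl e, Real.sq_sqrt hS0]
  -- relate S to Q h h and B
  have hsplit : ∑ p ∈ s, ((-1 : ℂ) ^ p * a p).re = (Q h h).re - 2 * (2 * B).re := by
    have e : ∑ p ∈ s, ((-1 : ℂ) ^ p * a p).re
        = ∑ p ∈ s, ((a p).re - (if Odd p then 2 * (a p).re else 0)) := by
      refine Finset.sum_congr rfl (fun p _ => ?_)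
      by_cases hp : Odd p
      · rw [hp.neg_one_zpow]
        simp [hp]
        ring
      · rw [(Int.not_odd_iff_even.mp hp).neg_one_zpow]
        simp [hp]
    rw [e, Finset.sum_sub_distrib, ← Finset.sum_filter, ← hodd, hQhh, Complex.re_sum,
      Complex.re_sum, Finset.mul_sum]
  -- conclude
  have hQre : (Q h h).re ≤ K := le_trans (Complex.re_le_norm _) hQh
  rw [hnh, hsplit]
  have : (2 * B).re = 2 * B.re := by simp
  rw [this, hT] at *
  nlinarith [hTR, hQre]
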